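/- arXiv:2004.03920 — 2 statements merged into one kernel-verified Lean document; each statement's English description precedes it below -/
import Mathlib

section
/- Fix a real number λ ≠ 0. For every integer n ≥ 0 and every real x, the degenerate Bell polynomial satisfies B_{n,λ}(x) = Σ_{m=0}^{n} J_{m,λ}(x) S_{1,λ}(n,m). -/
open Finset

/-- The degenerate falling factorial `(x)_{n,λ} = x(x−λ)⋯(x−(n−1)λ)`;
for `lam = 1` it is the ordinary falling factorial `(x)_n`. -/
noncomputable def dff (lam : ℝ) (n : ℕ) (x : ℝ) : ℝ :=
  ∏ i ∈ Finset.range n, (x - i * lam)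

/-- The degenerate exponential `e_λ^x(t) = Σ_{n≥0} (x)_{n,λ} t^n/n!`. -/
noncomputable def degExp (lam x : ℝ) : PowerSeries ℝ :=
  PowerSeries.mk fun n => dff lam n x / n.factorial

/-- The degenerate logarithm `log_λ(1+t) = Σ_{n≥1} λ^{n−1}(1)_{n,1/λ} t^n/n!`. -/
noncomputable def degLog (lam : ℝ) : PowerSeries ℝ :=
  PowerSeries.mk fun n =>
    if n = 0 then 0 else lam ^ (n - 1) * dff (1 / lam) n 1 / n.factorial

/-- Composition `f(g(t))` of formal power series (valid definition of composition
when `g` has zero constant term, as in all uses below). -/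
noncomputable def pscomp (f g : PowerSeries ℝ) : PowerSeries ℝ :=
  PowerSeries.mk fun n =>
    ∑ k ∈ Finset.range (n + 1), (PowerSeries.coeff k f) * (PowerSeries.coeff n (g ^ k))


open PowerSeries

lemma coeff_pscomp (f g : PowerSeries ℝ) (n : ℕ) :
    coeff n (pscomp f g) = ∑ k ∈ range (n + 1), coeff k f * coeff n (g ^ k) := by
  simp [pscomp]

lemma coeff_pow_zero {g : PowerSeries ℝ} (hg : constantCoeff g = 0)
    {k n : ℕ} (h : n < k) : coeff n (g ^ k) = 0 := by
  have hx : PowerSeries.X ∣ g := PowerSeries.X_dvd_iff.mpr hg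
  obtain ⟨c, hc⟩ := pow_dvd_pow_of_dvd hx k
  rw [hc, PowerSeries.coeff_X_pow_mul']
  simp [not_le.mpr h]

lemma coeff_eval2_trunc {g : PowerSeries ℝ} (hg : constantCoeff g = 0)
    (f : PowerSeries ℝ) {N n : ℕ} (h : n < N) :
    coeff n (Polynomial.eval₂ C g (trunc N f)) = coeff n (pscomp f g) := by
  rw [coeff_pscomp]
  have : trunc N f = ∑ m ∈ range N, Polynomial.monomial m (coeff m f) := by
    ext m
    simp [PowerSeries.coeff_trunc, Polynomial.finset_sum_coeff, Polynomial.coeff_monomial]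
  rw [this, Polynomial.eval₂_finset_sum]
  simp only [Polynomial.eval₂_monomial, map_sum, PowerSeries.coeff_C_mul]
  rw [← Finset.sum_subset (Finset.range_subset_range.mpr h)]
  intro k hk hk2
  have : n < k := by simp at hk2 ⊢; omega
  rw [coeff_pow_zero hg this, mul_zero]

lemma pscomp_mul {g : PowerSeries ℝ} (hg : constantCoeff g = 0) (a b : PowerSeries ℝ) :
    pscomp (a * b) g = pscomp a g * pscomp b g := by
  ext n
  have hdvd : (Polynomial.X : Polynomial ℝ) ^ (n+1) ∣
      (trunc (n+1) (a*b) - trunc (n+1) a * trunc (n+1) b) := by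
    rw [Polynomial.X_pow_dvd_iff]
    intro d hd
    rw [Polynomial.coeff_sub, Polynomial.coeff_mul, PowerSeries.coeff_trunc,
      if_pos hd, PowerSeries.coeff_mul]
    rw [sub_eq_zero]
    apply Finset.sum_congr rfl
    intro p hp
    rw [Finset.HasAntidiagonal.mem_antidiagonal] at hp
    rw [PowerSeries.coeff_trunc, PowerSeries.coeff_trunc, if_pos, if_pos] <;> omega
  obtain ⟨e, he⟩ := hdvd
  have h1 : trunc (n+1) (a*b) = trunc (n+1) a * trunc (n+1) b + Polynomial.X ^ (n+1) * e := by
    linear_combination he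
  have h2 : coeff n (Polynomial.eval₂ C g (Polynomial.X ^ (n+1) * e)) = 0 := by
    rw [Polynomial.eval₂_mul, Polynomial.eval₂_X_pow, PowerSeries.coeff_mul]
    apply Finset.sum_eq_zero
    intro p hp
    rw [Finset.HasAntidiagonal.mem_antidiagonal] at hp
    rw [coeff_pow_zero hg (by omega), zero_mul]
  rw [← coeff_eval2_trunc hg (a*b) (Nat.lt_succ_self n), h1, Polynomial.eval₂_add, map_add, h2,
    add_zero, Polynomial.eval₂_mul, PowerSeries.coeff_mul, PowerSeries.coeff_mul]
  apply Finset.sum_congr rfl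
  intro p hp
  rw [Finset.HasAntidiagonal.mem_antidiagonal] at hp
  rw [coeff_eval2_trunc hg a (by omega), coeff_eval2_trunc hg b (by omega)]

lemma pscomp_one (g : PowerSeries ℝ) : pscomp 1 g = 1 := by
  ext n
  rw [coeff_pscomp]
  rcases Nat.eq_zero_or_pos n with h | h
  · subst h; simp
  · rw [Finset.sum_eq_single 0]
    · simp [PowerSeries.coeff_one, Nat.pos_iff_ne_zero.mp h]
    · intro k _ hk
      simp [PowerSeries.coeff_one, hk]
    · simp

lemma pscomp_pow {g : PowerSeries ℝ} (hg : constantCoeff g = 0) (a : PowerSeries ℝ) (k : ℕ) :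
    pscomp (a ^ k) g = (pscomp a g) ^ k := by
  induction k with
  | zero => simpa using pscomp_one g
  | succ k ih => rw [pow_succ, pow_succ, pscomp_mul hg, ih]

lemma pscomp_add (a b g : PowerSeries ℝ) : pscomp (a + b) g = pscomp a g + pscomp b g := by
  ext n
  simp [coeff_pscomp, add_mul, Finset.sum_add_distrib]

lemma pscomp_sub_one (a g : PowerSeries ℝ) : pscomp (a - 1) g = pscomp a g - 1 := by
  have := pscomp_add (a - 1) 1 g
  rw [sub_add_cancel, pscomp_one] at this
  rw [eq_sub_iff_add_eq, this]

lemma dff_zero (lam x : ℝ) : dff lam 0 x = 1 := by simp [dff]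

lemma dff_succ (lam : ℝ) (n : ℕ) (x : ℝ) :
    dff lam (n+1) x = dff lam n x * (x - n * lam) := by
  simp [dff, Finset.prod_range_succ]

lemma dff_vandermonde (lam : ℝ) (n : ℕ) (a b : ℝ) :
    dff lam n (a + b) = ∑ k ∈ range (n+1), (n.choose k : ℝ) * dff lam k a * dff lam (n-k) b := by
  induction n with
  | zero => simp [dff_zero]
  | succ n ih =>
    rw [dff_succ, ih, Finset.sum_mul]
    have expand : ∀ k ∈ range (n+1),
        (n.choose k : ℝ) * dff lam k a * dff lam (n-k) b * (a + b - n*lam)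
        = (n.choose k : ℝ) * (dff lam (k+1) a * dff lam (n-k) b)
          + (n.choose k : ℝ) * (dff lam k a * dff lam (n-k+1) b) := by
      intro k hk
      rw [Finset.mem_range] at hk
      rw [dff_succ, dff_succ]
      have : (a + b - n*lam) = (a - k*lam) + (b - (n-k : ℕ)*lam) := by
        have : ((n-k : ℕ) : ℝ) = (n : ℝ) - k := by
          rw [Nat.cast_sub (by omega)]
        rw [this]; ring
      rw [this]; ring
    rw [Finset.sum_congr rfl expand, Finset.sum_add_distrib]
    -- standard Pascal-style reindexing
    have h1 : ∑ k ∈ range (n+1), (n.choose k : ℝ) * (dff lam (k+1) a * dff lam (n-k) b)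
        = ∑ k ∈ range (n+2), (if k = 0 then 0 else (n.choose (k-1) : ℝ)) * (dff lam k a * dff lam (n+1-k) b) := by
      rw [show n+2 = (n+1)+1 from rfl, Finset.sum_range_succ' (fun k => (if k = 0 then (0:ℝ) else (n.choose (k-1) : ℝ)) * (dff lam k a * dff lam (n+1-k) b))]
      simp
    have h2 : ∑ k ∈ range (n+1), (n.choose k : ℝ) * (dff lam k a * dff lam (n-k+1) b)
        = ∑ k ∈ range (n+2), (if k = n+1 then 0 else (n.choose k : ℝ)) * (dff lam k a * dff lam (n+1-k) b) := by
      rw [show n+2 = (n+1)+1 from rfl, Finset.sum_range_succ (fun k => (if k = n+1 then (0:ℝ) else (n.choose k : ℝ)) * (dff lam k a * dff lam (n+1-k) b))]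
      rw [if_pos rfl, zero_mul, add_zero]
      apply Finset.sum_congr rfl
      intro k hk
      rw [Finset.mem_range] at hk
      rw [if_neg (by omega), show n+1-k = n-k+1 by omega]
    rw [h1, h2, ← Finset.sum_add_distrib]
    apply Finset.sum_congr rfl
    intro k hk
    rw [Finset.mem_range] at hk
    rcases Nat.eq_zero_or_pos k with h | h
    · subst h; simp
    · obtain ⟨m, rfl⟩ : ∃ m, k = m + 1 := ⟨k - 1, by omega⟩
      rw [if_neg (Nat.succ_ne_zero m), Nat.add_sub_cancel]
      by_cases hk1 : m + 1 = n + 1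
      · rw [if_pos hk1]
        have hm : m = n := by omega
        subst hm
        simp [Nat.choose_self]
      · rw [if_neg hk1]
        have hc : (((n+1).choose (m+1) : ℕ) : ℝ) = (n.choose m : ℝ) + (n.choose (m+1) : ℝ) := by
          rw [Nat.choose_succ_succ]; push_cast; ring
        rw [hc]; ring

lemma coeff_degExp (lam x : ℝ) (n : ℕ) :
    coeff n (degExp lam x) = dff lam n x / n.factorial := by simp [degExp]

lemma degExp_mul (lam a b : ℝ) : degExp lam a * degExp lam b = degExp lam (a + b) := by
  ext n
  rw [PowerSeries.coeff_mul, coeff_degExp, dff_vandermonde,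
    Finset.Nat.sum_antidiagonal_eq_sum_range_succ (fun i j => coeff i (degExp lam a) * coeff j (degExp lam b)),
    Finset.sum_div]
  apply Finset.sum_congr rfl
  intro k hk
  rw [Finset.mem_range] at hk
  rw [coeff_degExp, coeff_degExp]
  have hfac : (n.factorial : ℝ) = (n.choose k : ℝ) * k.factorial * (n-k).factorial := by
    rw [← Nat.choose_mul_factorial_mul_factorial (by omega : k ≤ n)]
    push_cast; ring
  rw [hfac]
  have h1 : (k.factorial : ℝ) ≠ 0 := Nat.cast_ne_zero.mpr k.factorial_ne_zero
  have h2 : ((n-k).factorial : ℝ) ≠ 0 := Nat.cast_ne_zero.mpr (n-k).factorial_ne_zero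
  have h3 : (n.choose k : ℝ) ≠ 0 := Nat.cast_ne_zero.mpr (Nat.choose_pos (by omega : k ≤ n)).ne'
  field_simp

lemma degExp_zero (lam : ℝ) : degExp lam 0 = 1 := by
  ext n
  rw [coeff_degExp, PowerSeries.coeff_one]
  rcases Nat.eq_zero_or_pos n with h | h
  · subst h; simp [dff_zero]
  · rw [if_neg (by omega)]
    have : dff lam n 0 = 0 := by
      apply Finset.prod_eq_zero (Finset.mem_range.mpr h)
      simp
    rw [this, zero_div]

lemma degExp_pow (lam : ℝ) (N : ℕ) : (degExp lam 1) ^ N = degExp lam N := by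
  induction N with
  | zero => simp [degExp_zero]
  | succ N ih =>
    rw [pow_succ, ih, degExp_mul]
    norm_num

noncomputable def dffP (lam : ℝ) (n : ℕ) : Polynomial ℝ :=
  ∏ i ∈ Finset.range n, (Polynomial.X - Polynomial.C ((i : ℝ) * lam))

lemma dffP_eval (lam x : ℝ) (n : ℕ) : (dffP lam n).eval x = dff lam n x := by
  simp [dffP, dff, Polynomial.eval_prod]

lemma dffP_monic (lam : ℝ) (n : ℕ) : (dffP lam n).Monic :=
  Polynomial.monic_prod_of_monic _ _ (fun i _ => Polynomial.monic_X_sub_C _)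

lemma dffP_natDegree (lam : ℝ) (n : ℕ) : (dffP lam n).natDegree = n := by
  rw [dffP, Polynomial.natDegree_prod_of_monic _ _ (fun i _ => Polynomial.monic_X_sub_C _)]
  simp only [Polynomial.natDegree_X_sub_C, Finset.sum_const, Finset.card_range, smul_eq_mul, mul_one]

lemma dffP_coeff_self (lam : ℝ) (n : ℕ) : (dffP lam n).coeff n = 1 := by
  have := (dffP_monic lam n).leadingCoeff
  rwa [Polynomial.leadingCoeff, dffP_natDegree] at this

lemma dffP_coeff_zero (lam : ℝ) {m n : ℕ} (h : m < n) : (dffP lam m).coeff n = 0 :=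
  Polynomial.coeff_eq_zero_of_natDegree_lt (by rw [dffP_natDegree]; omega)

/-- linear independence of the degenerate falling factorials -/
lemma dff_indep (lam : ℝ) (c : ℕ → ℝ) :
    ∀ n : ℕ, (∀ x : ℝ, ∑ m ∈ range (n+1), c m * dff lam m x = 0) → ∀ m ≤ n, c m = 0 := by
  intro n
  induction n with
  | zero =>
    intro h m hm
    interval_cases m
    have := h 0
    simpa [dff] using this
  | succ n ih =>
    intro h m hm
    have hpoly : ∑ m ∈ range (n+2), c m • dffP lam m = 0 := by
      apply Polynomial.funext
      intro x
      rw [Polynomial.eval_finset_sum]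
      simp only [Polynomial.eval_smul, smul_eq_mul, dffP_eval, Polynomial.eval_zero]
      exact h x
    have htop : c (n+1) = 0 := by
      have := congrArg (fun p => Polynomial.coeff p (n+1)) hpoly
      simp only [Polynomial.finset_sum_coeff, Polynomial.coeff_smul, smul_eq_mul,
        Polynomial.coeff_zero] at this
      rw [Finset.sum_range_succ, dffP_coeff_self] at this
      rw [Finset.sum_eq_zero (fun m hm => by
        rw [Finset.mem_range] at hm
        rw [dffP_coeff_zero lam hm, mul_zero])] at this
      simpa using this
    rcases Nat.lt_or_ge m (n+1) with h' | h'
    · apply ih _ m (by omega)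
      intro x
      have := h x
      rw [Finset.sum_range_succ, htop, zero_mul, add_zero] at this
      exact this
    · have : m = n+1 := by omega
      rw [this]; exact htop

lemma polyeq_of_nat_eval {p q : Polynomial ℝ} (h : ∀ N : ℕ, p.eval (N : ℝ) = q.eval (N : ℝ)) :
    p = q := by
  have : p - q = 0 := by
    apply Polynomial.eq_zero_of_infinite_isRoot
    apply Set.Infinite.mono (s := Set.range (fun N : ℕ => (N : ℝ)))
    · rintro x ⟨N, rfl⟩
      simp [Polynomial.IsRoot, h N]
    · exact Set.infinite_range_of_injective Nat.cast_injective
  exact sub_eq_zero.mp this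

/-- `(x)_k` at a natural number: `dff 1 k N = N.descFactorial k` -/
lemma dff_one_nat (N k : ℕ) : dff 1 k (N : ℝ) = (N.descFactorial k : ℝ) := by
  induction k with
  | zero => simp [dff]
  | succ k ih =>
    rcases Nat.lt_or_ge N k with h | h
    · have h1 : dff 1 (k+1) (N:ℝ) = 0 := by
        apply Finset.prod_eq_zero (Finset.mem_range.mpr (by omega : N < k+1))
        simp
      have h2 : N.descFactorial (k+1) = 0 := Nat.descFactorial_eq_zero_iff_lt.mpr (by omega)
      rw [h1, h2, Nat.cast_zero]
    · rw [show dff 1 (k+1) (N:ℝ) = dff 1 k (N:ℝ) * ((N:ℝ) - k) by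
        simp [dff, Finset.prod_range_succ], ih, Nat.descFactorial_succ]
      rw [← Nat.cast_sub h]
      push_cast [Nat.cast_sub h]
      ring

lemma hg_const (lam : ℝ) : constantCoeff (degExp lam 1 - 1) = 0 := by
  rw [map_sub, map_one, ← PowerSeries.coeff_zero_eq_constantCoeff, coeff_degExp]
  simp [dff_zero]

lemma lemmaA (lam x : ℝ) : pscomp (degExp 1 x) (degExp lam 1 - 1) = degExp lam x := by
  set g := degExp lam 1 - 1 with hgdef
  have hg : constantCoeff g = 0 := hg_const lam
  ext n
  rw [coeff_pscomp, coeff_degExp]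
  set p : Polynomial ℝ := ∑ k ∈ range (n+1),
      Polynomial.C (coeff n (g ^ k) / k.factorial) * dffP 1 k with hp
  set q : Polynomial ℝ := Polynomial.C (1 / (n.factorial:ℝ)) * dffP lam n with hq
  have hpq : p = q := by
    apply polyeq_of_nat_eval
    intro N
    have hpe : p.eval (N : ℝ) = ∑ k ∈ range (n+1), (N.choose k : ℝ) * coeff n (g ^ k) := by
      rw [hp, Polynomial.eval_finset_sum]
      apply Finset.sum_congr rfl
      intro k _
      rw [Polynomial.eval_mul, Polynomial.eval_C, dffP_eval, dff_one_nat,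
        Nat.descFactorial_eq_factorial_mul_choose]
      have : (k.factorial : ℝ) ≠ 0 := Nat.cast_ne_zero.mpr k.factorial_ne_zero
      push_cast
      field_simp
    have hqe : q.eval (N : ℝ) = ∑ k ∈ range (N+1), (N.choose k : ℝ) * coeff n (g ^ k) := by
      rw [hq, Polynomial.eval_mul, Polynomial.eval_C, dffP_eval]
      have h1 : (1 / (n.factorial : ℝ)) * dff lam n (N : ℝ) = coeff n (degExp lam (N : ℝ)) := by
        rw [coeff_degExp]; ring
      rw [h1, ← degExp_pow, show degExp lam 1 = g + 1 by rw [hgdef]; ring, add_pow]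
      rw [map_sum]
      apply Finset.sum_congr rfl
      intro k _
      rw [one_pow, mul_one, ← map_natCast (PowerSeries.C (R := ℝ)) (N.choose k),
        PowerSeries.coeff_mul_C]
      ring
    rw [hpe, hqe]
    rcases Nat.le_total (n+1) (N+1) with h | h
    · rw [Finset.sum_subset (Finset.range_subset_range.mpr h)]
      intro k hk hk2
      rw [Finset.mem_range] at hk hk2
      rw [coeff_pow_zero hg (by omega), mul_zero]
    · rw [← Finset.sum_subset (Finset.range_subset_range.mpr h)]
      intro k hk hk2
      rw [Finset.mem_range] at hk hk2
      rw [Nat.choose_eq_zero_of_lt (by omega), Nat.cast_zero, zero_mul]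
  have := congrArg (fun r => Polynomial.eval x r) hpq
  simp only [hp, hq, Polynomial.eval_finset_sum, Polynomial.eval_mul, Polynomial.eval_C,
    dffP_eval] at this
  rw [show dff lam n x / (n.factorial:ℝ) = 1 / (n.factorial:ℝ) * dff lam n x by ring, ← this]
  apply Finset.sum_congr rfl
  intro k _
  rw [coeff_degExp]
  ring

theorem bell_via_jindalrae (lam : ℝ) (hlam : lam ≠ 0)
    (S1 : ℕ → ℕ → ℝ) (B J : ℕ → ℝ → ℝ)
    (hS1 : ∀ (n : ℕ) (x : ℝ), dff 1 n x = ∑ l ∈ Finset.range (n + 1), S1 n l * dff lam l x)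
    (hB : ∀ x : ℝ, pscomp (degExp lam x) (degExp lam 1 - 1) = PowerSeries.mk (fun n => B n x / n.factorial))
    (hJ : ∀ x : ℝ, pscomp (degExp lam x) (pscomp (degExp lam 1) (degExp lam 1 - 1) - 1) = PowerSeries.mk (fun n => J n x / n.factorial))
    : ∀ (n : ℕ) (x : ℝ), B n x = ∑ m ∈ Finset.range (n + 1), J m x * S1 n m := by
  intro n x
  set g := degExp lam 1 - 1 with hgdef
  have hg : constantCoeff g = 0 := hg_const lam
  have hfac : ∀ m : ℕ, ((m.factorial : ℝ)) ≠ 0 := fun m => Nat.cast_ne_zero.mpr m.factorial_ne_zero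
  -- coefficients of the Bell series
  have hBc : ∀ k : ℕ, ∑ i ∈ range (k+1), coeff i (degExp lam x) * coeff k (g ^ i)
      = B k x / k.factorial := by
    intro k
    have := congrArg (fun s => coeff k s) (hB x)
    simpa [coeff_pscomp] using this
  -- coefficients of the Jindalrae series
  have hJc : ∀ m : ℕ, J m x = (m.factorial : ℝ) *
      ∑ k ∈ range (m+1), (B k x / k.factorial) * coeff m (g ^ k) := by
    intro m
    have h3 : pscomp (degExp lam 1) g - 1 = pscomp g g := (pscomp_sub_one (degExp lam 1) g).symm
    have hJ' := congrArg (fun s => coeff m s) (hJ x)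
    simp only [PowerSeries.coeff_mk, h3] at hJ'
    have step : coeff m (pscomp (degExp lam x) (pscomp g g))
        = ∑ k ∈ range (m+1), (B k x / k.factorial) * coeff m (g ^ k) := by
      rw [coeff_pscomp]
      have e1 : ∀ i ∈ range (m+1), coeff i (degExp lam x) * coeff m ((pscomp g g) ^ i)
          = ∑ k ∈ range (m+1), coeff i (degExp lam x) * (coeff k (g ^ i) * coeff m (g ^ k)) := by
        intro i _
        rw [← pscomp_pow hg, coeff_pscomp, Finset.mul_sum]
      rw [Finset.sum_congr rfl e1, Finset.sum_comm]
      apply Finset.sum_congr rfl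
      intro k hk
      rw [Finset.mem_range] at hk
      rw [← hBc k, Finset.sum_mul,
        ← Finset.sum_subset (Finset.range_subset_range.mpr (by omega : k+1 ≤ m+1))]
      · apply Finset.sum_congr rfl; intro i _; ring
      · intro i hi hi2
        rw [Finset.mem_range] at hi hi2
        rw [coeff_pow_zero hg (by omega : k < i), zero_mul, mul_zero]
    rw [step] at hJ'
    rw [hJ']
    field_simp
  -- the key inverse-matrix relation coming from `lemmaA` and `hS1`
  have hrel : ∀ r, r ≤ n → ∀ m, m ≤ r →
      ∑ k ∈ range (n+1), (if m ≤ k then S1 k m / (k.factorial : ℝ) else 0) * coeff r (g ^ k)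
        = (if m = r then 1 / (r.factorial : ℝ) else 0) := by
    intro r hr m hm
    have base : ∀ m' ≤ r,
        ∑ k ∈ range (r+1), (if m' ≤ k then S1 k m' / (k.factorial : ℝ) else 0) * coeff r (g ^ k)
          = (if m' = r then 1 / (r.factorial : ℝ) else 0) := by
      have hzero : ∀ x' : ℝ, ∑ m' ∈ range (r+1),
          ((∑ k ∈ range (r+1), (if m' ≤ k then S1 k m' / (k.factorial : ℝ) else 0) * coeff r (g ^ k))
            - (if m' = r then 1 / (r.factorial : ℝ) else 0)) * dff lam m' x' = 0 := by
        intro x'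
        have lA := congrArg (fun s => coeff r s) (lemmaA lam x')
        simp only [coeff_pscomp, coeff_degExp] at lA
        have expand : ∑ m' ∈ range (r+1),
            (∑ k ∈ range (r+1), (if m' ≤ k then S1 k m' / (k.factorial : ℝ) else 0) * coeff r (g ^ k)) * dff lam m' x'
            = ∑ k ∈ range (r+1), (dff 1 k x' / (k.factorial : ℝ)) * coeff r (g ^ k) := by
          have swap : ∑ m' ∈ range (r+1),
              (∑ k ∈ range (r+1), (if m' ≤ k then S1 k m' / (k.factorial : ℝ) else 0) * coeff r (g ^ k)) * dff lam m' x'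
              = ∑ k ∈ range (r+1), ∑ m' ∈ range (r+1),
                (if m' ≤ k then S1 k m' / (k.factorial : ℝ) else 0) * coeff r (g ^ k) * dff lam m' x' := by
            rw [← Finset.sum_comm]
            apply Finset.sum_congr rfl
            intro m' _
            rw [Finset.sum_mul]
          rw [swap]
          apply Finset.sum_congr rfl
          intro k hk
          rw [Finset.mem_range] at hk
          have inner : ∑ m' ∈ range (r+1),
              (if m' ≤ k then S1 k m' / (k.factorial : ℝ) else 0) * coeff r (g ^ k) * dff lam m' x'
              = (coeff r (g ^ k) / (k.factorial : ℝ)) * ∑ m' ∈ range (k+1), S1 k m' * dff lam m' x' := by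
            rw [Finset.mul_sum,
              ← Finset.sum_subset (Finset.range_subset_range.mpr (by omega : k+1 ≤ r+1))]
            · apply Finset.sum_congr rfl
              intro m' hm'
              rw [Finset.mem_range] at hm'
              rw [if_pos (by omega : m' ≤ k)]
              ring
            · intro m' hm' hm2
              rw [Finset.mem_range] at hm' hm2
              rw [if_neg (by omega), zero_mul, zero_mul]
          rw [inner, ← hS1 k x']
          ring
        rw [Finset.sum_congr rfl (fun m' _ => sub_mul _ _ (dff lam m' x')), Finset.sum_sub_distrib,
          expand, lA]
        rw [Finset.sum_eq_single r]
        · rw [if_pos rfl]; ring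
        · intro m' _ hm'
          rw [if_neg hm', zero_mul]
        · intro h; exact absurd (Finset.self_mem_range_succ r) h
      intro m' hm'
      have := dff_indep lam _ r hzero m' hm'
      linarith [this]
    rw [← Finset.sum_subset (Finset.range_subset_range.mpr (by omega : r+1 ≤ n+1))]
    · exact base m hm
    · intro k hk hk2
      rw [Finset.mem_range] at hk hk2
      rw [coeff_pow_zero hg (by omega : r < k), mul_zero]
  -- package as matrices over `Fin (n+1)` and invert
  set U : Matrix (Fin (n+1)) (Fin (n+1)) ℝ :=
    Matrix.of (fun m k : Fin (n+1) =>
      if (m:ℕ) ≤ (k:ℕ) then S1 (k:ℕ) (m:ℕ) / (((k:ℕ).factorial : ℝ)) else 0) with hU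
  set A : Matrix (Fin (n+1)) (Fin (n+1)) ℝ :=
    Matrix.of (fun k r : Fin (n+1) => coeff (r:ℕ) (g ^ (k:ℕ)) * (((r:ℕ).factorial : ℝ))) with hA
  have hUA : U * A = 1 := by
    ext m r
    rw [Matrix.mul_apply]
    have conv : ∀ k : Fin (n+1), U m k * A k r
        = (fun k : ℕ => (if (m:ℕ) ≤ k then S1 k (m:ℕ) / ((k.factorial : ℝ)) else 0)
            * coeff (r:ℕ) (g ^ k) * (((r:ℕ).factorial : ℝ))) (k:ℕ) := by
      intro k
      simp only [hU, hA, Matrix.of_apply]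
      ring
    rw [Finset.sum_congr rfl (fun k _ => conv k),
      Fin.sum_univ_eq_sum_range (fun k : ℕ => (if (m:ℕ) ≤ k then S1 k (m:ℕ) / ((k.factorial : ℝ)) else 0)
        * coeff (r:ℕ) (g ^ k) * (((r:ℕ).factorial : ℝ))) (n+1), ← Finset.sum_mul]
    rcases le_or_gt (m:ℕ) (r:ℕ) with h | h
    · rw [hrel (r:ℕ) (by omega) (m:ℕ) h]
      rcases eq_or_ne m r with he | he
      · subst he
        rw [if_pos rfl, Matrix.one_apply_eq]
        field_simp
      · rw [if_neg (fun hc => he (Fin.ext hc)), Matrix.one_apply_ne he, zero_mul]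
    · have hzero : ∑ k ∈ range (n+1),
          (if (m:ℕ) ≤ k then S1 k (m:ℕ) / ((k.factorial : ℝ)) else 0) * coeff (r:ℕ) (g ^ k) = 0 := by
        apply Finset.sum_eq_zero
        intro k hk
        rcases le_or_gt (m:ℕ) k with h2 | h2
        · rw [coeff_pow_zero hg (by omega : (r:ℕ) < k), mul_zero]
        · rw [if_neg (by omega), zero_mul]
      rw [hzero, zero_mul, Matrix.one_apply_ne (fun hc => by rw [hc] at h; omega)]
  have hAU : A * U = 1 := mul_eq_one_comm.mp hUA
  have key : ∀ k : ℕ, k ≤ n →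
      ∑ m ∈ range (n+1), coeff m (g ^ k) * (m.factorial : ℝ) * S1 n m
        = if k = n then (n.factorial : ℝ) else 0 := by
    intro k hk
    have := congrFun (congrFun hAU ⟨k, by omega⟩) ⟨n, by omega⟩
    rw [Matrix.mul_apply] at this
    have conv : ∀ m : Fin (n+1), A ⟨k, by omega⟩ m * U m ⟨n, by omega⟩
        = (fun m : ℕ => coeff m (g ^ k) * (m.factorial : ℝ) * S1 n m / (n.factorial : ℝ)) (m:ℕ) := by
      intro m
      simp only [hU, hA, Matrix.of_apply]
      rw [if_pos (by omega : (m:ℕ) ≤ n)]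
      ring
    rw [Finset.sum_congr rfl (fun m _ => conv m),
      Fin.sum_univ_eq_sum_range (fun m : ℕ => coeff m (g ^ k) * (m.factorial : ℝ) * S1 n m / (n.factorial : ℝ)) (n+1),
      ← Finset.sum_div] at this
    rcases eq_or_ne k n with he | he
    · subst he
      rw [Matrix.one_apply_eq] at this
      rw [if_pos rfl]
      field_simp at this ⊢
      linarith [this]
    · rw [Matrix.one_apply_ne (fun hc => he (by simpa using congrArg Fin.val hc))] at this
      rw [if_neg he]
      field_simp at this
      simpa using this
  -- final assembly
  have expand : ∀ m ∈ range (n+1), J m x * S1 n m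
      = ∑ k ∈ range (n+1), (B k x / k.factorial) * (coeff m (g ^ k) * (m.factorial : ℝ) * S1 n m) := by
    intro m hm
    rw [Finset.mem_range] at hm
    rw [hJc m, Finset.sum_subset (Finset.range_subset_range.mpr (by omega : m+1 ≤ n+1))]
    · rw [Finset.mul_sum, Finset.sum_mul, Finset.sum_congr rfl]
      intro k _
      ring
    · intro k hk hk2
      rw [Finset.mem_range] at hk hk2
      rw [coeff_pow_zero hg (by omega : m < k), mul_zero]
  rw [Finset.sum_congr rfl expand, Finset.sum_comm]
  have final : ∀ k ∈ range (n+1),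
      ∑ m ∈ range (n+1), (B k x / k.factorial) * (coeff m (g ^ k) * (m.factorial : ℝ) * S1 n m)
        = (B k x / k.factorial) * (if k = n then (n.factorial : ℝ) else 0) := by
    intro k hk
    rw [Finset.mem_range] at hk
    rw [← Finset.mul_sum, key k (by omega)]
  rw [Finset.sum_congr rfl final, Finset.sum_eq_single n]
  · rw [if_pos rfl]
    field_simp
  · intro k _ hk
    rw [if_neg hk, mul_zero]
  · intro h; exact absurd (Finset.self_mem_range_succ n) h
end

section
/- Fix a real number λ ≠ 0. For every integer n ≥ 0 and every real x, the Gaenari polynomial satisfies G_{n,λ}(x) = Σ_{k=0}^{n} (x)_{k,λ} S^{(1)}_{J,λ}(n,k); in particular G_{n,λ} = Σ_{k=0}^{n} (1)_{k,λ} S^{(1)}_{J,λ}(n,k). -/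
open Finset

theorem gaenari_polynomial_expansion (lam : ℝ) (hlam : lam ≠ 0)
    (SJ1 : ℕ → ℕ → ℝ) (G : ℕ → ℝ → ℝ)
    (hSJ1 : ∀ k : ℕ, (PowerSeries.C ((k.factorial : ℝ))⁻¹) * (pscomp (degLog lam) (degLog lam)) ^ k = PowerSeries.mk (fun n => if k ≤ n then SJ1 n k / n.factorial else 0))
    (hG : ∀ x : ℝ, pscomp (degExp lam x) (pscomp (degLog lam) (degLog lam)) = PowerSeries.mk (fun n => G n x / n.factorial))
    : ∀ (n : ℕ) (x : ℝ), G n x = ∑ k ∈ Finset.range (n + 1), dff lam k x * SJ1 n k := by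
  intro n x
  have hL : ∀ k, (PowerSeries.coeff n) ((pscomp (degLog lam) (degLog lam)) ^ k)
      = if k ≤ n then (k.factorial : ℝ) * (SJ1 n k / n.factorial) else 0 := by
    intro k
    have h := congrArg (PowerSeries.coeff n) (hSJ1 k)
    rw [PowerSeries.coeff_C_mul, PowerSeries.coeff_mk] at h
    have hk : (k.factorial : ℝ) ≠ 0 := Nat.cast_ne_zero.2 k.factorial_ne_zero
    have := congrArg (fun y => (k.factorial : ℝ) * y) h
    simp only [← mul_assoc, mul_inv_cancel₀ hk, one_mul] at this
    rw [this]
    split_ifs <;> ring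
  have h := congrArg (PowerSeries.coeff n) (hG x)
  rw [show pscomp (degExp lam x) (pscomp (degLog lam) (degLog lam)) =
      PowerSeries.mk fun m => ∑ k ∈ Finset.range (m + 1), (PowerSeries.coeff k (degExp lam x)) * (PowerSeries.coeff m ((pscomp (degLog lam) (degLog lam)) ^ k)) from rfl] at h
  rw [PowerSeries.coeff_mk, PowerSeries.coeff_mk] at h
  have hn : (n.factorial : ℝ) ≠ 0 := Nat.cast_ne_zero.2 n.factorial_ne_zero
  have hsum : ∑ k ∈ Finset.range (n + 1), (PowerSeries.coeff k (degExp lam x)) * (PowerSeries.coeff n ((pscomp (degLog lam) (degLog lam)) ^ k))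
      = (∑ k ∈ Finset.range (n + 1), dff lam k x * SJ1 n k) / n.factorial := by
    rw [Finset.sum_div]
    apply Finset.sum_congr rfl
    intro k hk
    rw [Finset.mem_range] at hk
    have hkn : k ≤ n := Nat.lt_succ_iff.mp hk
    rw [hL k, if_pos hkn]
    have hkf : (k.factorial : ℝ) ≠ 0 := Nat.cast_ne_zero.2 k.factorial_ne_zero
    simp only [degExp, PowerSeries.coeff_mk]
    field_simp
  rw [hsum] at h
  field_simp at h
  linarith [h]
end
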